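/- Let $n \ge 1$, let $j \ge 1$, and let $u = x_{\alpha(1)} \cdots x_{\alpha(j)}$ be a monomial of degree $j$ in $S = K[x_1,\ldots,x_n]$ with $1 \le \alpha(1) \le \cdots \le \alpha(j) \le n$. Then the number of monomials $v \in S$ of degree $j$ with $v <_{lex} u$ equals $\sum_{i=1}^{j} \binom{n - \alpha(j+1-i) + i - 1}{i}$, where $<_{lex}$ is the lexicographic order with $x_1 > x_2 > \cdots > x_n$. -/

import Mathlib

/-- `v <_lex u` for exponent vectors, lex order with `x_1 > x_2 > ⋯ > x_n`. -/
def lexLt {n : ℕ} (v u : Fin n →₀ ℕ) : Prop :=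
  ∃ i : Fin n, (∀ j < i, v j = u j) ∧ v i < u i

namespace Stmt7Aux

open Finset

variable {n j : ℕ}

/-- degree of an exponent vector -/
def deg (v : Fin n →₀ ℕ) : ℕ := ∑ k : Fin n, v k

lemma deg_eq (v : Fin n →₀ ℕ) : (v.sum fun _ e => e) = deg v :=
  Finsupp.sum_fintype _ _ (fun _ => rfl)

lemma deg_add (v w : Fin n →₀ ℕ) : deg (v + w) = deg v + deg w := by
  simp [deg, Finset.sum_add_distrib]

lemma deg_sum {ι : Type*} (s : Finset ι) (f : ι → (Fin n →₀ ℕ)) :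
    deg (∑ r ∈ s, f r) = ∑ r ∈ s, deg (f r) := by
  simp only [deg, Finsupp.finset_sum_apply]
  exact Finset.sum_comm

lemma deg_single (a : Fin n) : deg (Finsupp.single a 1) = 1 := by
  simp [deg, Finsupp.single_apply]

/-- the prefix monomial `x_{α 0} ⋯ x_{α (m-1)}` -/
noncomputable def pref (α : Fin j → Fin n) (m : ℕ) : Fin n →₀ ℕ :=
  ∑ r ∈ univ.filter (fun r : Fin j => r.val < m), Finsupp.single (α r) 1

lemma pref_apply (α : Fin j → Fin n) (m : ℕ) (k : Fin n) :
    pref α m k = (univ.filter (fun r : Fin j => r.val < m ∧ α r = k)).card := by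
  rw [pref, Finsupp.finset_sum_apply, Finset.card_filter, ← Finset.sum_filter]
  simp [Finsupp.single_apply, Finset.filter_filter]

lemma u_eq_pref (α : Fin j → Fin n) :
    (∑ i : Fin j, Finsupp.single (α i) 1) = pref α j := by
  rw [pref]
  congr 1
  simp [Finset.filter_true_of_mem, Fin.is_lt]

lemma card_filter_val_lt (m : ℕ) (hm : m ≤ j) :
    (univ.filter (fun r : Fin j => r.val < m)).card = m := by
  rw [Finset.card_filter]
  rw [Fin.sum_univ_eq_sum_range (fun r => if r < m then 1 else 0)]
  rw [← Finset.card_filter]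
  have : Finset.filter (fun r => r < m) (Finset.range j) = Finset.range m := by
    ext a; simp; omega
  rw [this, Finset.card_range]

lemma deg_pref (α : Fin j → Fin n) (m : ℕ) (hm : m ≤ j) : deg (pref α m) = m := by
  rw [pref, deg_sum]
  simp only [deg_single]
  rw [Finset.sum_const, smul_eq_mul, mul_one, card_filter_val_lt m hm]

/-- a down-closed finset of `Fin j` is an initial segment -/
lemma downclosed_mem_iff (s : Finset (Fin j))
    (hs : ∀ a b : Fin j, a ≤ b → b ∈ s → a ∈ s) (r : Fin j) :
    r ∈ s ↔ r.val < s.card := by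
  constructor
  · intro hr
    have hsub : Finset.Iic r ⊆ s := fun a ha => hs a r (Finset.mem_Iic.mp ha) hr
    have := Finset.card_le_card hsub
    rw [Fin.card_Iic] at this
    omega
  · intro h
    by_contra hr
    have hsub : s ⊆ Finset.Iio r := by
      intro a ha
      rw [Finset.mem_Iio]
      by_contra hge
      exact hr (hs r a (le_of_not_gt hge) ha)
    have := Finset.card_le_card hsub
    rw [Fin.card_Iio] at this
    omega


lemma card_filter_Ico (a b : ℕ) (hb : b ≤ j) :
    (univ.filter (fun r : Fin j => a ≤ r.val ∧ r.val < b)).card = b - a := by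
  rw [Finset.card_filter]
  rw [Fin.sum_univ_eq_sum_range (fun r => if a ≤ r ∧ r < b then 1 else 0)]
  rw [← Finset.card_filter]
  have : Finset.filter (fun r => a ≤ r ∧ r < b) (Finset.range j) = Finset.Ico a b := by
    ext r; simp [Finset.mem_Ico]; omega
  rw [this, Nat.card_Ico]

section Main

variable (α : Fin j → Fin n)

lemma pref_apply_top (k : Fin n) :
    pref α j k = (univ.filter (fun r : Fin j => α r = k)).card := by
  rw [pref_apply]
  congr 1
  ext r
  simp [r.is_lt]

lemma pref_eq_of_lt (hα : Monotone α) {i : Fin j} {k : Fin n} (hk : k < α i) :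
    pref α i.val k = pref α j k := by
  rw [pref_apply, pref_apply]
  congr 1
  ext r
  simp only [Finset.mem_filter, Finset.mem_univ, true_and, r.is_lt]
  refine ⟨fun h => h.2, fun h => ⟨?_, h⟩⟩
  by_contra hri
  exact absurd (h ▸ hα (le_of_not_gt (fun hc => hri hc))) (not_le.mpr hk)

lemma pref_lt (hα : Monotone α) (i : Fin j) (m : ℕ) (him : i.val < m) :
    pref α i.val (α i) < pref α m (α i) := by
  rw [pref_apply, pref_apply]
  apply Finset.card_lt_card
  constructor
  · intro r hr
    simp only [Finset.mem_filter, Finset.mem_univ, true_and] at hr ⊢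
    exact ⟨lt_trans hr.1 him, hr.2⟩
  · intro hsub
    have := hsub (by simp [him] : i ∈ univ.filter (fun r : Fin j => r.val < m ∧ α r = α i))
    simp at this

/-- fiber of the decomposition -/
def Fib (i : Fin j) : Type :=
  {w : Fin n →₀ ℕ // (∀ k : Fin n, k.val ≤ (α i).val → w k = 0) ∧ deg w = j - i.val}

lemma B_deg (i : Fin j) (w : Fib α i) : deg (pref α i.val + w.1) = j := by
  rw [deg_add, deg_pref α i.val i.is_lt.le, w.2.2]
  omega

lemma B_lex (hα : Monotone α) (i : Fin j) (w : Fib α i) :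
    lexLt (pref α i.val + w.1) (pref α j) := by
  refine ⟨α i, fun k hk => ?_, ?_⟩
  · rw [Finsupp.add_apply, w.2.1 k (le_of_lt hk), add_zero, pref_eq_of_lt α hα hk]
  · rw [Finsupp.add_apply, w.2.1 (α i) le_rfl, add_zero]
    exact pref_lt α hα i j i.is_lt

noncomputable def B (hα : Monotone α) : (Σ i : Fin j, Fib α i) →
    {v : Fin n →₀ ℕ // deg v = j ∧ lexLt v (pref α j)} :=
  fun x => ⟨pref α x.1.val + x.2.1, B_deg α x.1 x.2, B_lex α hα x.1 x.2⟩

lemma B_inj (hα : Monotone α) : Function.Injective (B α hα) := by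
  rintro ⟨i, w⟩ ⟨i', w'⟩ h
  have h' : pref α i.val + w.1 = pref α i'.val + w'.1 := congrArg Subtype.val h
  have key : ∀ (a b : Fin j) (x : Fib α a) (y : Fib α b), a < b →
      pref α a.val + x.1 ≠ pref α b.val + y.1 := by
    intro a b x y hab heq
    have h1 : (pref α a.val + x.1) (α a) = (pref α b.val + y.1) (α a) := by rw [heq]
    rw [Finsupp.add_apply, Finsupp.add_apply, x.2.1 (α a) le_rfl,
      y.2.1 (α a) (hα hab.le), add_zero, add_zero] at h1
    exact absurd h1 (ne_of_lt (pref_lt α hα a b.val hab))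
  rcases lt_trichotomy i i' with hlt | heq | hgt
  · exact absurd h' (key i i' w w' hlt)
  · subst heq
    have hww : w = w' := Subtype.ext (add_left_cancel h')
    rw [hww]
  · exact absurd h'.symm (key i' i w' w hgt)

lemma B_surj (hα : Monotone α) : Function.Surjective (B α hα) := by
  rintro ⟨v, hdeg, k0, hpre, hlt⟩
  classical
  set t := (univ.filter fun r : Fin j => α r < k0).card with ht
  have P1 : ∀ r : Fin j, α r < k0 ↔ r.val < t := by
    intro r
    have := downclosed_mem_iff (univ.filter fun r : Fin j => α r < k0)
      (fun a b hab hb => by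
        simp only [Finset.mem_filter, Finset.mem_univ, true_and] at hb ⊢
        exact lt_of_le_of_lt (hα hab) hb) r
    simpa using this
  have hcu : pref α j k0 = (univ.filter fun r : Fin j => α r = k0).card := pref_apply_top α k0
  set c := (univ.filter fun r : Fin j => α r = k0).card with hc
  have hle_card : (univ.filter fun r : Fin j => α r ≤ k0).card = t + c := by
    rw [ht, hc, ← Finset.card_union_of_disjoint ?_]
    · congr 1
      ext r
      simp only [Finset.mem_union, Finset.mem_filter, Finset.mem_univ, true_and]
      exact ⟨fun h => h.lt_or_eq, fun h => h.elim le_of_lt le_of_eq⟩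
    · simp only [Finset.disjoint_left, Finset.mem_filter, Finset.mem_univ, true_and]
      intro r h1 h2
      exact absurd h2 (ne_of_lt h1)
  have P3 : ∀ r : Fin j, α r ≤ k0 ↔ r.val < t + c := by
    intro r
    rw [← hle_card]
    have := downclosed_mem_iff (univ.filter fun r : Fin j => α r ≤ k0)
      (fun a b hab hb => by
        simp only [Finset.mem_filter, Finset.mem_univ, true_and] at hb ⊢
        exact le_trans (hα hab) hb) r
    simpa using this
  have htcj : t + c ≤ j := by
    rw [← hle_card]
    calc (univ.filter fun r : Fin j => α r ≤ k0).card
        ≤ (univ : Finset (Fin j)).card := Finset.card_filter_le _ _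
      _ = j := by simp
  have hvc : v k0 < c := by rw [hcu] at hlt; exact hlt
  have hij : t + v k0 < j := by omega
  set i : Fin j := ⟨t + v k0, hij⟩ with hi
  have hival : i.val = t + v k0 := rfl
  have hαi : α i = k0 := by
    have h1 : α i ≤ k0 := (P3 i).mpr (by rw [hival]; omega)
    have h2 : ¬ α i < k0 := by rw [P1, hival]; omega
    exact le_antisymm h1 (le_of_not_gt h2)
  have V1 : ∀ k : Fin n, k < k0 → pref α i.val k = v k := by
    intro k hk
    have heq : pref α i.val k = pref α j k := by
      rw [pref_apply, pref_apply]
      congr 1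
      ext r
      simp only [Finset.mem_filter, Finset.mem_univ, true_and, r.is_lt, and_true, true_implies]
      refine ⟨fun h => h.2, fun h => ⟨?_, h⟩⟩
      have hrt : r.val < t := (P1 r).mp (h ▸ hk)
      omega
    rw [heq, ← hpre k hk]
  have V2 : pref α i.val k0 = v k0 := by
    rw [pref_apply]
    have heq : (univ.filter fun r : Fin j => r.val < i.val ∧ α r = k0)
        = univ.filter (fun r : Fin j => t ≤ r.val ∧ r.val < i.val) := by
      ext r
      simp only [Finset.mem_filter, Finset.mem_univ, true_and]
      constructor
      · rintro ⟨h1, h2⟩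
        have hn : ¬ r.val < t := fun hcon => by
          have := (P1 r).mpr hcon
          rw [h2] at this
          exact lt_irrefl _ this
        exact ⟨le_of_not_gt hn, h1⟩
      · rintro ⟨h1, h2⟩
        have ha : α r ≤ k0 := (P3 r).mpr (by omega)
        have hb : ¬ α r < k0 := fun hcon => absurd ((P1 r).mp hcon) (by omega)
        exact ⟨h2, le_antisymm ha (le_of_not_gt hb)⟩
    rw [heq, card_filter_Ico t i.val (le_of_lt i.is_lt), hival]
    omega
  have V3 : ∀ k : Fin n, k0 < k → pref α i.val k = 0 := by
    intro k hk
    rw [pref_apply, Finset.card_eq_zero]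
    ext r
    simp only [Finset.mem_filter, Finset.mem_univ, true_and, Finset.notMem_empty, iff_false]
    rintro ⟨h1, h2⟩
    have hle : α r ≤ k0 := (P3 r).mpr (by omega)
    rw [h2] at hle
    exact absurd hk (not_lt.mpr hle)
  set w : Fin n →₀ ℕ := v - pref α i.val with hw
  have hwk : ∀ k : Fin n, w k = v k - pref α i.val k :=
    fun k => Finsupp.tsub_apply v _ k
  have hsum : pref α i.val + w = v := by
    ext k
    rw [Finsupp.add_apply, hwk k]
    rcases lt_trichotomy k k0 with h | h | h
    · rw [V1 k h]; omega
    · subst h; rw [V2]; omega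
    · rw [V3 k h]; omega
  have hsupp : ∀ k : Fin n, k.val ≤ (α i).val → w k = 0 := by
    intro k hk
    rw [hαi] at hk
    rcases lt_or_eq_of_le hk with h | h
    · rw [hwk k, V1 k h]; omega
    · have hkk : k = k0 := Fin.ext h
      rw [hwk k, hkk, V2]; omega
  have hdw : deg w = j - i.val := by
    have h1 : deg (pref α i.val + w) = j := by rw [hsum, hdeg]
    rw [deg_add, deg_pref α i.val (le_of_lt i.is_lt)] at h1
    omega
  exact ⟨⟨i, w, hsupp, hdw⟩, Subtype.ext hsum⟩

/-- counting equiv: from `{w : σ →₀ ℕ // sum = m}` to `Sym σ m` -/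
noncomputable def symEquiv (σ : Type*) (m : ℕ) :
    {w : σ →₀ ℕ // (w.sum fun _ e => e) = m} ≃ Sym σ m := by
  classical
  exact
  { toFun := fun w => ⟨Finsupp.toMultiset w.1, by
      rw [Finsupp.card_toMultiset]; exact w.2⟩
    invFun := fun s => ⟨Multiset.toFinsupp s.1, by
      have := Multiset.toFinsupp_sum_eq s.1
      rw [s.2] at this
      exact this⟩
    left_inv := fun w => Subtype.ext (Finsupp.toMultiset_toFinsupp w.1)
    right_inv := fun s => Subtype.ext (Multiset.toFinsupp_toMultiset s.1) }

noncomputable def fibEquiv (i : Fin j) :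
    Fib α i ≃ Sym (Set.Ioi (α i)) (j - i.val) := by
  classical
  refine Equiv.trans (Equiv.trans (Equiv.trans
    (Equiv.subtypeEquivRight (q := fun w : Fin n →₀ ℕ =>
        ↑w.support ⊆ Set.Ioi (α i) ∧ deg w = j - i.val) (fun w => ?_))
    (Equiv.subtypeSubtypeEquivSubtypeInter
      (fun w : Fin n →₀ ℕ => ↑w.support ⊆ Set.Ioi (α i))
      (fun w => deg w = j - i.val)).symm)
    ((Finsupp.restrictSupportEquiv (Set.Ioi (α i)) ℕ).subtypeEquiv (fun w => ?_)))
    (symEquiv _ _)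
  · constructor
    · rintro ⟨h1, h2⟩
      refine ⟨fun k hk => ?_, h2⟩
      simp only [Finset.mem_coe, Finsupp.mem_support_iff] at hk
      simp only [Set.mem_Ioi]
      by_contra hc
      exact hk (h1 k (le_of_not_gt hc))
    · rintro ⟨h1, h2⟩
      refine ⟨fun k hk => ?_, h2⟩
      by_contra hc
      have := h1 (Finsupp.mem_support_iff.mpr hc)
      simp only [Set.mem_Ioi] at this
      exact absurd hk (not_le.mpr this)
  · show deg w.1 = j - i.val ↔ _
    have hsum : ((Finsupp.restrictSupportEquiv (Set.Ioi (α i)) ℕ) w).sum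
        (fun _ e => e) = deg w.1 := by
      rw [Finsupp.sum_fintype _ _ (fun _ => rfl)]
      have e1 : ∀ k : Set.Ioi (α i),
          ((Finsupp.restrictSupportEquiv (Set.Ioi (α i)) ℕ) w) k = w.1 k.1 :=
        fun k => rfl
      simp only [e1]
      rw [← Finset.sum_subtype (univ.filter (fun k : Fin n => k ∈ Set.Ioi (α i)))
        (fun k => by simp) (fun k => w.1 k)]
      rw [deg]
      exact Finset.sum_filter_of_ne
        (fun k _ hk => w.2 (Finset.mem_coe.mpr (Finsupp.mem_support_iff.mpr hk)))
    rw [hsum]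

noncomputable instance (i : Fin j) : Fintype (Fib α i) :=
  Fintype.ofEquiv _ (fibEquiv α i).symm

lemma card_fib (i : Fin j) :
    Nat.card (Fib α i) = Nat.multichoose (n - 1 - (α i).val) (j - i.val) := by
  classical
  rw [Nat.card_congr (fibEquiv α i), Nat.card_eq_fintype_card,
    Sym.card_sym_eq_multichoose, ← Set.toFinset_card, Set.toFinset_Ioi, Fin.card_Ioi]

lemma main_count (hα : Monotone α) :
    Nat.card {v : Fin n →₀ ℕ // deg v = j ∧ lexLt v (pref α j)} =
      ∑ i : Fin j, Nat.multichoose (n - 1 - (α i).val) (j - i.val) := by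
  rw [← Nat.card_congr (Equiv.ofBijective (B α hα) ⟨B_inj α hα, B_surj α hα⟩)]
  rw [Nat.card_eq_fintype_card, Fintype.card_sigma]
  exact Finset.sum_congr rfl (fun i _ => by rw [← Nat.card_eq_fintype_card, card_fib])

end Main

end Stmt7Aux

theorem stmt_7 (n j : ℕ) (hn : 1 ≤ n) (hj : 1 ≤ j)
    (α : Fin j → Fin n) (hα : Monotone α) :
    Nat.card {v : Fin n →₀ ℕ //
        (v.sum fun _ e => e) = j ∧ lexLt v (∑ i : Fin j, Finsupp.single (α i) 1)} =
      ∑ i : Fin j, Nat.choose (n - 1 - (α (Fin.rev i)).val + i.val) (i.val + 1) := by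
  open Stmt7Aux in
  rw [Nat.card_congr (Equiv.subtypeEquivRight (fun v => by
    rw [Stmt7Aux.deg_eq, Stmt7Aux.u_eq_pref]))]
  rw [Stmt7Aux.main_count α hα]
  refine (Fintype.sum_equiv Fin.revPerm _ _ (fun i => ?_)).symm
  simp only [Fin.revPerm_apply]
  have h1 : (Fin.rev i).val = j - 1 - i.val := by
    rw [Fin.val_rev]
    omega
  rw [h1, Nat.multichoose_eq]
  have h2 : j - (j - 1 - i.val) = i.val + 1 := by
    have := i.is_lt
    omega
  rw [h2]
  have h3 : n - 1 - (α (Fin.rev i)).val + (i.val + 1) - 1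
      = n - 1 - (α (Fin.rev i)).val + i.val := by omega
  rw [h3]
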